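/- Define g(τ₀) = max{ min_{i} τᵢ·log₂(1 + γᵢ·τ₀/τᵢ) : τᵢ ∈ [0,1] ∀i, Σᵢ τᵢ ≤ 1 − τ₀ }. Then g is concave on [0, 1]; moreover for distinct t₁, t₂ ∈ (0,1) and θ ∈ (0,1), g(θt₁ + (1−θ)t₂) > θg(t₁) + (1−θ)g(t₂) (strict concavity). -/

import Mathlib

open Real Set

set_option linter.deprecated false
set_option linter.unusedVariables false

section aux
variable {c c₁ c₂ x x₁ x₂ θ : ℝ}

lemma aux_nonneg (hc : 0 ≤ c) (hx : 0 ≤ x) : 0 ≤ x * Real.logb 2 (1 + c / x) := by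
  rcases eq_or_lt_of_le hx with h|h
  · simp [← h]
  · exact mul_nonneg hx (Real.logb_nonneg one_lt_two (by nlinarith [div_nonneg hc hx]))

lemma aux_bound (hc : 0 ≤ c) (hx : 0 ≤ x) : x * Real.logb 2 (1 + c / x) ≤ c / Real.log 2 := by
  have h2 : (0:ℝ) < Real.log 2 := Real.log_pos one_lt_two
  rcases eq_or_lt_of_le hx with h|h
  · rw [← h]; simp; positivity
  · have h1 : Real.log (1 + c/x) ≤ c/x := by
      have := Real.log_le_sub_one_of_pos (x := 1 + c/x) (by positivity)
      linarith
    rw [Real.logb, show x * (Real.log (1 + c / x) / Real.log 2)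
        = (x * Real.log (1+c/x))/Real.log 2 by ring]
    rw [div_le_div_iff_of_pos_right h2]
    calc x * Real.log (1 + c/x) ≤ x * (c/x) := by
          exact mul_le_mul_of_nonneg_left h1 hx
      _ = c := by field_simp

/-- strict concavity of log gives: log (1 + λ u) > λ log (1 + u) -/
lemma aux_log_smul {u l : ℝ} (hu : 0 < u) (hl : 0 < l) (hl1 : l < 1) :
    l * Real.log (1 + u) < Real.log (1 + l * u) := by
  have h := strictConcaveOn_log_Ioi.2 (mem_Ioi.mpr one_pos)
      (mem_Ioi.mpr (by linarith : (0:ℝ) < 1 + u)) (by nlinarith)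
      (by linarith : (0:ℝ) < 1 - l) hl (by ring)
  simp only [smul_eq_mul, Real.log_one, mul_zero, zero_add] at h
  calc l * Real.log (1 + u) ≤ (1-l) * Real.log 1 + l * Real.log (1+u) := by
        simp
    _ < Real.log ((1-l) * 1 + l * (1+u)) := by
        simpa using h
    _ = Real.log (1 + l * u) := by ring_nf

lemma aux_strict_mono (hc : 0 < c) (hx : 0 ≤ x) (hxy : x < x₂) :
    x * Real.logb 2 (1 + c / x) < x₂ * Real.logb 2 (1 + c / x₂) := by
  have h2 : (0:ℝ) < Real.log 2 := Real.log_pos one_lt_two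
  have hy : 0 < x₂ := lt_of_le_of_lt hx hxy
  rcases eq_or_lt_of_le hx with h|h
  · rw [← h]
    simp only [zero_mul]
    exact mul_pos hy (Real.logb_pos one_lt_two (by nlinarith [div_pos hc hy]))
  · have key := aux_log_smul (u := c / x) (l := x / x₂) (div_pos hc h)
      (div_pos h hy) ((div_lt_one hy).mpr hxy)
    have hcx : x / x₂ * (c / x) = c / x₂ := by field_simp
    rw [hcx] at key
    simp only [Real.logb]
    rw [show x * (Real.log (1 + c / x) / Real.log 2) = (x * Real.log (1+c/x))/Real.log 2 by ring,
      show x₂ * (Real.log (1 + c / x₂) / Real.log 2) = (x₂ * Real.log (1+c/x₂))/Real.log 2 by ring]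
    rw [div_lt_div_iff_of_pos_right h2]
    calc x * Real.log (1 + c/x) = x₂ * (x / x₂ * Real.log (1 + c/x)) := by
          field_simp
      _ < x₂ * Real.log (1 + c/x₂) := mul_lt_mul_of_pos_left key hy
end aux

section core
variable {c₁ c₂ x₁ x₂ a b : ℝ}

lemma aux_core (hc₁ : 0 ≤ c₁) (hc₂ : 0 ≤ c₂) (hx₁ : 0 < x₁) (hx₂ : 0 < x₂)
    (ha : 0 < a) (hb : 0 < b) (hab : a + b = 1) :
    a * (x₁ * Real.log (1 + c₁ / x₁)) + b * (x₂ * Real.log (1 + c₂ / x₂)) ≤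
      (a * x₁ + b * x₂) * Real.log (1 + (a * c₁ + b * c₂) / (a * x₁ + b * x₂)) := by
  set A := a * x₁ + b * x₂ with hA
  have hA0 : 0 < A := by positivity
  set l₁ := a * x₁ / A with hl₁
  set l₂ := b * x₂ / A with hl₂
  have hsum : l₁ + l₂ = 1 := by rw [hl₁, hl₂]; field_simp; exact hA.symm
  have harg : l₁ * (1 + c₁ / x₁) + l₂ * (1 + c₂ / x₂) = 1 + (a * c₁ + b * c₂) / A := by
    rw [hl₁, hl₂]; field_simp; ring
  have h := strictConcaveOn_log_Ioi.concaveOn.2 (mem_Ioi.mpr (by positivity : (0:ℝ) < 1 + c₁/x₁))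
    (mem_Ioi.mpr (by positivity : (0:ℝ) < 1 + c₂/x₂)) (by positivity) (by positivity) hsum
  simp only [smul_eq_mul] at h
  rw [harg] at h
  calc a * (x₁ * Real.log (1 + c₁ / x₁)) + b * (x₂ * Real.log (1 + c₂ / x₂))
      = A * (l₁ * Real.log (1 + c₁ / x₁) + l₂ * Real.log (1 + c₂ / x₂)) := by
        rw [hl₁, hl₂]; field_simp
    _ ≤ A * Real.log (1 + (a * c₁ + b * c₂) / A) := by
        exact mul_le_mul_of_nonneg_left h hA0.le

lemma aux_core_strict (hc₁ : 0 ≤ c₁) (hc₂ : 0 ≤ c₂) (hx₁ : 0 < x₁) (hx₂ : 0 < x₂)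
    (ha : 0 < a) (hb : 0 < b) (hab : a + b = 1) (hne : c₁ * x₂ ≠ c₂ * x₁) :
    a * (x₁ * Real.log (1 + c₁ / x₁)) + b * (x₂ * Real.log (1 + c₂ / x₂)) <
      (a * x₁ + b * x₂) * Real.log (1 + (a * c₁ + b * c₂) / (a * x₁ + b * x₂)) := by
  set A := a * x₁ + b * x₂ with hA
  have hA0 : 0 < A := by positivity
  set l₁ := a * x₁ / A with hl₁
  set l₂ := b * x₂ / A with hl₂
  have hsum : l₁ + l₂ = 1 := by rw [hl₁, hl₂]; field_simp; exact hA.symm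
  have harg : l₁ * (1 + c₁ / x₁) + l₂ * (1 + c₂ / x₂) = 1 + (a * c₁ + b * c₂) / A := by
    rw [hl₁, hl₂]; field_simp; ring
  have hXne : (1 : ℝ) + c₁ / x₁ ≠ 1 + c₂ / x₂ := by
    intro hcon
    apply hne
    have : c₁ / x₁ = c₂ / x₂ := by linarith
    rw [div_eq_div_iff hx₁.ne' hx₂.ne'] at this
    linarith [this]
  have h := strictConcaveOn_log_Ioi.2 (mem_Ioi.mpr (by positivity : (0:ℝ) < 1 + c₁/x₁))
    (mem_Ioi.mpr (by positivity : (0:ℝ) < 1 + c₂/x₂)) hXne (by positivity) (by positivity) hsum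
  simp only [smul_eq_mul] at h
  rw [harg] at h
  calc a * (x₁ * Real.log (1 + c₁ / x₁)) + b * (x₂ * Real.log (1 + c₂ / x₂))
      = A * (l₁ * Real.log (1 + c₁ / x₁) + l₂ * Real.log (1 + c₂ / x₂)) := by
        rw [hl₁, hl₂]; field_simp
    _ < A * Real.log (1 + (a * c₁ + b * c₂) / A) := by
        exact mul_lt_mul_of_pos_left h hA0
end core

section wrap
variable {c₁ c₂ x₁ x₂ a b : ℝ}

lemma aux_concave (hc₁ : 0 ≤ c₁) (hc₂ : 0 ≤ c₂) (hx₁ : 0 ≤ x₁) (hx₂ : 0 ≤ x₂)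
    (ha : 0 ≤ a) (hb : 0 ≤ b) (hab : a + b = 1) :
    a * (x₁ * Real.logb 2 (1 + c₁ / x₁)) + b * (x₂ * Real.logb 2 (1 + c₂ / x₂)) ≤
      (a * x₁ + b * x₂) * Real.logb 2 (1 + (a * c₁ + b * c₂) / (a * x₁ + b * x₂)) := by
  have h2 : (0:ℝ) < Real.log 2 := Real.log_pos one_lt_two
  rcases eq_or_lt_of_le ha with rfl|ha
  · have hb1 : b = 1 := by linarith
    simp [hb1]
  rcases eq_or_lt_of_le hb with rfl|hb
  · have ha1 : a = 1 := by linarith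
    simp [ha1]
  rcases eq_or_lt_of_le hx₁ with rfl|hx₁
  · rcases eq_or_lt_of_le hx₂ with rfl|hx₂
    · simp
    · -- x₁ = 0, x₂ > 0
      have hkey : c₂ / x₂ ≤ (a * c₁ + b * c₂) / (a * 0 + b * x₂) := by
        rw [div_le_div_iff₀ hx₂ (by simpa using mul_pos hb hx₂)]
        nlinarith [mul_nonneg (mul_nonneg ha.le hc₁) hx₂.le]
      calc a * (0 * Real.logb 2 (1 + c₁ / 0)) + b * (x₂ * Real.logb 2 (1 + c₂ / x₂))
          = (a * 0 + b * x₂) * Real.logb 2 (1 + c₂ / x₂) := by ring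
        _ ≤ (a * 0 + b * x₂) * Real.logb 2 (1 + (a * c₁ + b * c₂) / (a * 0 + b * x₂)) := by
            apply mul_le_mul_of_nonneg_left _ (by positivity)
            apply Real.logb_le_logb_of_le one_lt_two (by positivity)
            linarith
  rcases eq_or_lt_of_le hx₂ with rfl|hx₂
  · -- x₂ = 0, x₁ > 0
    have hkey : c₁ / x₁ ≤ (a * c₁ + b * c₂) / (a * x₁ + b * 0) := by
      rw [div_le_div_iff₀ hx₁ (by simpa using mul_pos ha hx₁)]
      nlinarith [mul_nonneg (mul_nonneg hb.le hc₂) hx₁.le]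
    calc a * (x₁ * Real.logb 2 (1 + c₁ / x₁)) + b * (0 * Real.logb 2 (1 + c₂ / 0))
        = (a * x₁ + b * 0) * Real.logb 2 (1 + c₁ / x₁) := by ring
      _ ≤ (a * x₁ + b * 0) * Real.logb 2 (1 + (a * c₁ + b * c₂) / (a * x₁ + b * 0)) := by
          apply mul_le_mul_of_nonneg_left _ (by positivity)
          apply Real.logb_le_logb_of_le one_lt_two (by positivity)
          linarith
  · have h := aux_core hc₁ hc₂ hx₁ hx₂ ha hb hab
    simp only [Real.logb]
    rw [show a * (x₁ * (Real.log (1 + c₁ / x₁) / Real.log 2)) +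
        b * (x₂ * (Real.log (1 + c₂ / x₂) / Real.log 2)) =
        (a * (x₁ * Real.log (1 + c₁ / x₁)) + b * (x₂ * Real.log (1 + c₂ / x₂))) / Real.log 2
        by ring,
      show (a * x₁ + b * x₂) * (Real.log (1 + (a * c₁ + b * c₂) / (a * x₁ + b * x₂)) / Real.log 2)
        = ((a * x₁ + b * x₂) * Real.log (1 + (a * c₁ + b * c₂) / (a * x₁ + b * x₂))) / Real.log 2
        by ring,
      div_le_div_iff_of_pos_right h2]
    exact h

lemma aux_strict (hc₁ : 0 ≤ c₁) (hc₂ : 0 ≤ c₂) (hx₁ : 0 < x₁) (hx₂ : 0 < x₂)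
    (ha : 0 < a) (hb : 0 < b) (hab : a + b = 1) (hne : c₁ * x₂ ≠ c₂ * x₁) :
    a * (x₁ * Real.logb 2 (1 + c₁ / x₁)) + b * (x₂ * Real.logb 2 (1 + c₂ / x₂)) <
      (a * x₁ + b * x₂) * Real.logb 2 (1 + (a * c₁ + b * c₂) / (a * x₁ + b * x₂)) := by
  have h2 : (0:ℝ) < Real.log 2 := Real.log_pos one_lt_two
  have h := aux_core_strict hc₁ hc₂ hx₁ hx₂ ha hb hab hne
  simp only [Real.logb]
  rw [show a * (x₁ * (Real.log (1 + c₁ / x₁) / Real.log 2)) +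
      b * (x₂ * (Real.log (1 + c₂ / x₂) / Real.log 2)) =
      (a * (x₁ * Real.log (1 + c₁ / x₁)) + b * (x₂ * Real.log (1 + c₂ / x₂))) / Real.log 2
      by ring,
    show (a * x₁ + b * x₂) * (Real.log (1 + (a * c₁ + b * c₂) / (a * x₁ + b * x₂)) / Real.log 2)
      = ((a * x₁ + b * x₂) * Real.log (1 + (a * c₁ + b * c₂) / (a * x₁ + b * x₂))) / Real.log 2
      by ring,
    div_lt_div_iff_of_pos_right h2]
  exact h
end wrap

lemma aux_contOn {c : ℝ} (hc : 0 < c) :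
    ContinuousOn (fun x : ℝ => x * Real.logb 2 (1 + c / x)) (Set.Icc 0 1) := by
  have h2 : (0:ℝ) < Real.log 2 := Real.log_pos one_lt_two
  have hcont : ContinuousOn
      (fun x : ℝ => (x * Real.log (x + c) - x * Real.log x) / Real.log 2) (Set.Icc 0 1) := by
    apply ContinuousOn.div_const
    apply ContinuousOn.sub _ (Real.continuous_mul_log.continuousOn)
    apply continuousOn_of_forall_continuousAt
    intro x hx
    exact continuousAt_id.mul ((Real.continuousAt_log (by
      have := hx.1; positivity)).comp (continuousAt_id.add continuousAt_const))
  apply hcont.congr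
  intro x hx
  rcases eq_or_lt_of_le hx.1 with rfl|hx0
  · simp
  · have hxc : x + c > 0 := by linarith
    show x * Real.logb 2 (1 + c / x) = (x * Real.log (x + c) - x * Real.log x) / Real.log 2
    rw [show (1 : ℝ) + c / x = (x + c) / x by field_simp]
    rw [Real.logb, Real.log_div (by positivity) hx0.ne']
    ring

section main
variable {K : ℕ}

def feas (K : ℕ) (t : ℝ) (τ : Fin K → ℝ) : Prop :=
  (∀ i, τ i ∈ Set.Icc (0:ℝ) 1) ∧ (∑ i, τ i ≤ 1 - t)

noncomputable def FF (hK : 0 < K) (γ : Fin K → ℝ) (t : ℝ) (τ : Fin K → ℝ) : ℝ :=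
  Finset.univ.inf' (Finset.univ_nonempty_iff.mpr (Fin.pos_iff_nonempty.mp hK))
    (fun i => τ i * Real.logb 2 (1 + γ i * t / τ i))

noncomputable def SS (hK : 0 < K) (γ : Fin K → ℝ) (t : ℝ) : Set ℝ :=
  {v : ℝ | ∃ τ : Fin K → ℝ, (∀ i, τ i ∈ Set.Icc (0 : ℝ) 1) ∧ (∑ i, τ i ≤ 1 - t) ∧
      v = FF hK γ t τ}

variable (hK : 0 < K) (γ : Fin K → ℝ) {t : ℝ} {τ : Fin K → ℝ}

lemma FF_mem (h : feas K t τ) : FF hK γ t τ ∈ SS hK γ t := ⟨τ, h.1, h.2, rfl⟩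

lemma SS_bdd (hγ : ∀ i, 0 < γ i) (ht : 0 ≤ t) : BddAbove (SS hK γ t) := by
  refine ⟨γ ⟨0, hK⟩ * t / Real.log 2, ?_⟩
  rintro v ⟨τ, h1, h2, rfl⟩
  calc FF hK γ t τ ≤ τ ⟨0, hK⟩ * Real.logb 2 (1 + γ ⟨0, hK⟩ * t / τ ⟨0, hK⟩) :=
        Finset.inf'_le _ (Finset.mem_univ _)
    _ ≤ γ ⟨0, hK⟩ * t / Real.log 2 :=
        aux_bound (mul_nonneg (hγ _).le ht) (h1 _).1

lemma SS_ne (ht : t ≤ 1) : (SS hK γ t).Nonempty :=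
  ⟨FF hK γ t 0, 0, fun _ => ⟨le_refl _, zero_le_one⟩, by simpa using by linarith, rfl⟩

lemma FF_nonneg (hγ : ∀ i, 0 < γ i) (ht : 0 ≤ t) (h : ∀ i, 0 ≤ τ i) : 0 ≤ FF hK γ t τ :=
  Finset.le_inf' _ _ fun i _ => aux_nonneg (mul_nonneg (hγ i).le ht) (h i)

lemma FF_le_sSup (hγ : ∀ i, 0 < γ i) (ht0 : 0 ≤ t) (h : feas K t τ) : FF hK γ t τ ≤ sSup (SS hK γ t) :=
  le_csSup (SS_bdd hK γ hγ ht0) (FF_mem hK γ h)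

lemma sSup_le_FF {B : ℝ} (ht1 : t ≤ 1) (h : ∀ τ, feas K t τ → FF hK γ t τ ≤ B) :
    sSup (SS hK γ t) ≤ B := by
  refine csSup_le (SS_ne hK γ ht1) ?_
  rintro v ⟨τ, h1, h2, rfl⟩
  exact h τ ⟨h1, h2⟩

lemma sSup_pos (hγ : ∀ i, 0 < γ i) (ht : t ∈ Set.Ioo (0:ℝ) 1) : 0 < sSup (SS hK γ t) := by
  obtain ⟨ht0, ht1⟩ := ht
  have hx : (0:ℝ) < (1 - t) / K := by
    apply div_pos (by linarith) (by exact_mod_cast hK)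
  have hK1 : (1:ℝ) ≤ K := by exact_mod_cast hK
  have hfeas : feas K t (fun _ => (1 - t)/K) := by
    constructor
    · intro i
      constructor
      · exact hx.le
      · calc (1-t)/K ≤ (1-t)/1 := by gcongr
          _ ≤ 1 := by linarith
    · simp only [Finset.sum_const, Finset.card_univ, Fintype.card_fin, nsmul_eq_mul]
      have hKne : (K:ℝ) ≠ 0 := by positivity
      rw [mul_div_cancel₀ _ hKne]
  refine lt_of_lt_of_le ?_ (FF_le_sSup hK γ hγ ht0.le hfeas)
  rw [FF]
  rw [Finset.lt_inf'_iff]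
  intro i _
  apply mul_pos hx
  apply Real.logb_pos one_lt_two
  have : 0 < γ i * t / ((1-t)/K) := by
    have := hγ i
    positivity
  linarith


lemma attain (hγ : ∀ i, 0 < γ i) (ht : t ∈ Set.Ioo (0:ℝ) 1) :
    ∃ σ : Fin K → ℝ, feas K t σ ∧ (∀ i, 0 < σ i) ∧ (∑ i, σ i = 1 - t) ∧
      FF hK γ t σ = sSup (SS hK γ t) := by
  obtain ⟨ht0, ht1⟩ := ht
  set Φ : Set (Fin K → ℝ) := {τ | feas K t τ} with hΦ
  have hΦc : IsCompact Φ := by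
    have h1 : Φ = (Set.pi Set.univ fun _ : Fin K => Set.Icc (0:ℝ) 1) ∩
        {τ : Fin K → ℝ | ∑ i, τ i ≤ 1 - t} := by
      ext τ
      simp only [hΦ, Set.mem_setOf_eq, feas, Set.mem_inter_iff, Set.mem_pi, Set.mem_univ,
        forall_true_left, true_implies]
    rw [h1]
    exact (isCompact_univ_pi fun _ => isCompact_Icc).inter_right
      (isClosed_le (by continuity) continuous_const)
  have hΦne : (fun _ : Fin K => (0:ℝ)) ∈ Φ :=
    ⟨fun _ => ⟨le_refl _, zero_le_one⟩, by simpa using by linarith⟩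
  have hcont : ContinuousOn (fun τ => FF hK γ t τ) Φ := by
    apply ContinuousOn.finset_inf'_apply
    intro i _
    have hmaps : ∀ τ ∈ Φ, τ i ∈ Set.Icc (0:ℝ) 1 := fun τ hτ => hτ.1 i
    exact (aux_contOn (mul_pos (hγ i) ht0)).comp (continuous_apply i).continuousOn hmaps
  obtain ⟨τ₀, hτ₀Φ, hmax⟩ := hΦc.exists_isMaxOn ⟨_, hΦne⟩ hcont
  have hτ₀ : feas K t τ₀ := hτ₀Φ
  have hsup : sSup (SS hK γ t) = FF hK γ t τ₀ := by
    apply le_antisymm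
    · exact sSup_le_FF hK γ (by linarith) fun τ hf => hmax hf
    · exact FF_le_sSup hK γ hγ ht0.le hτ₀
  have hgpos : 0 < FF hK γ t τ₀ := by
    rw [← hsup]; exact sSup_pos hK γ hγ ⟨ht0, ht1⟩
  have hpos : ∀ i, 0 < τ₀ i := by
    intro i
    rcases eq_or_lt_of_le (hτ₀.1 i).1 with h|h
    · exfalso
      have : FF hK γ t τ₀ ≤ τ₀ i * Real.logb 2 (1 + γ i * t / τ₀ i) :=
        Finset.inf'_le _ (Finset.mem_univ _)
      rw [← h] at this
      simp at this
      linarith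
    · exact h
  set s := ∑ i, τ₀ i with hs
  have hspos : 0 < s := Finset.sum_pos (fun i _ => hpos i) ⟨⟨0, hK⟩, Finset.mem_univ _⟩
  set cc := (1 - t) / s with hcc
  have hcc1 : 1 ≤ cc := (one_le_div hspos).mpr hτ₀.2
  have hccpos : 0 < cc := by linarith
  have hsum : ∑ i, cc * τ₀ i = 1 - t := by
    rw [← Finset.mul_sum, ← hs, hcc, div_mul_cancel₀ _ hspos.ne']
  have hle1 : ∀ i, cc * τ₀ i ≤ 1 := by
    intro i
    calc cc * τ₀ i ≤ ∑ j, cc * τ₀ j :=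
          Finset.single_le_sum (fun j _ => mul_nonneg hccpos.le (hpos j).le) (Finset.mem_univ i)
      _ = 1 - t := hsum
      _ ≤ 1 := by linarith
  have hfeas' : feas K t (fun i => cc * τ₀ i) :=
    ⟨fun i => ⟨mul_nonneg hccpos.le (hpos i).le, hle1 i⟩, le_of_eq hsum⟩
  have hFFle : FF hK γ t τ₀ ≤ FF hK γ t (fun i => cc * τ₀ i) := by
    apply Finset.le_inf'
    intro i _
    show FF hK γ t τ₀ ≤ cc * τ₀ i * Real.logb 2 (1 + γ i * t / (cc * τ₀ i))
    rcases eq_or_lt_of_le hcc1 with h|h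
    · rw [← h, one_mul]
      exact Finset.inf'_le _ (Finset.mem_univ _)
    · calc FF hK γ t τ₀ ≤ τ₀ i * Real.logb 2 (1 + γ i * t / τ₀ i) :=
            Finset.inf'_le _ (Finset.mem_univ _)
        _ ≤ cc * τ₀ i * Real.logb 2 (1 + γ i * t / (cc * τ₀ i)) := by
            apply le_of_lt
            exact aux_strict_mono (mul_pos (hγ i) ht0) (hpos i).le
              (by nlinarith [hpos i])
  refine ⟨fun i => cc * τ₀ i, hfeas', fun i => mul_pos hccpos (hpos i), hsum, ?_⟩
  apply le_antisymm
  · exact FF_le_sSup hK γ hγ ht0.le hfeas'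
  · rw [hsup]
    exact hFFle


lemma aux_contAt {c x : ℝ} (hc : 0 < c) (hx : 0 < x) :
    ContinuousAt (fun y : ℝ => y * Real.logb 2 (1 + c / y)) x := by
  have h1 : ContinuousAt (fun y : ℝ => 1 + c / y) x :=
    continuousAt_const.add (continuousAt_const.div continuousAt_id hx.ne')
  have h2 : ContinuousAt (fun y : ℝ => Real.log (1 + c / y)) x :=
    (Real.continuousAt_log (by positivity)).comp h1
  have h3 : ContinuousAt (fun y : ℝ => y * (Real.log (1 + c / y) / Real.log 2)) x :=
    continuousAt_id.mul (h2.div_const _)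
  exact h3

lemma improve (hγ : ∀ i, 0 < γ i) (ht : t ∈ Set.Ioo (0:ℝ) 1) (hf : feas K t τ)
    (i₀ : Fin K) (hlt : FF hK γ t τ < τ i₀ * Real.logb 2 (1 + γ i₀ * t / τ i₀)) :
    FF hK γ t τ < sSup (SS hK γ t) := by
  obtain ⟨ht0, ht1⟩ := ht
  set m := FF hK γ t τ with hm
  have hm0 : 0 ≤ m := FF_nonneg hK γ hγ ht0.le fun i => (hf.1 i).1
  have hτ₀ : 0 < τ i₀ := by
    rcases eq_or_lt_of_le (hf.1 i₀).1 with h|h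
    · exfalso; rw [← h] at hlt; simp at hlt; linarith
    · exact h
  have hca := aux_contAt (mul_pos (hγ i₀) ht0) hτ₀
  have hmem : (fun y : ℝ => y * Real.logb 2 (1 + γ i₀ * t / y)) ⁻¹' Set.Ioi m ∈ nhds (τ i₀) :=
    hca (Ioi_mem_nhds hlt)
  obtain ⟨ε, hε, hball⟩ := Metric.mem_nhds_iff.mp hmem
  set δ := min (min (ε/2) (τ i₀)) t with hδdef
  have hδ : 0 < δ := lt_min (lt_min (by linarith) hτ₀) ht0
  have hδε : δ < ε := lt_of_le_of_lt ((min_le_left _ _).trans (min_le_left _ _)) (by linarith)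
  have hδτ : δ ≤ τ i₀ := (min_le_left _ _).trans (min_le_right _ _)
  have hδt : δ ≤ t := min_le_right _ _
  have hK1 : (1:ℝ) ≤ K := by exact_mod_cast hK
  have hδK : δ / K ≤ δ := div_le_self hδ.le hK1
  set τ' : Fin K → ℝ := fun i => if i = i₀ then τ i₀ - δ else τ i + δ / K with hτ'
  have hτ'i₀ : τ' i₀ = τ i₀ - δ := by simp [hτ']
  have hτ'ne : ∀ i, i ≠ i₀ → τ' i = τ i + δ / K := by intro i h; simp [hτ', h]
  have hsum' : ∑ i, τ' i ≤ 1 - t := by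
    have heq : ∀ i, τ' i = (τ i + δ / K) - (if i = i₀ then δ + δ / K else 0) := by
      intro i
      by_cases h : i = i₀
      · subst h; rw [hτ'i₀, if_pos rfl]; ring
      · simp [hτ', h]
    rw [Finset.sum_congr rfl fun i _ => heq i, Finset.sum_sub_distrib,
      Finset.sum_add_distrib, Finset.sum_const, Finset.card_univ, Fintype.card_fin,
      Finset.sum_ite_eq' Finset.univ i₀ fun _ => δ + δ / K]
    simp only [Finset.mem_univ, if_true, nsmul_eq_mul]
    have hKd : (K:ℝ) * (δ / K) = δ := by field_simp
    have := hf.2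
    have hδK0 : (0:ℝ) ≤ δ / K := by positivity
    linarith
  have hfeas' : feas K t τ' := by
    refine ⟨fun i => ?_, hsum'⟩
    by_cases h : i = i₀
    · subst h
      rw [hτ'i₀]
      exact ⟨by linarith, by linarith [(hf.1 i).2]⟩
    · rw [hτ'ne i h]
      constructor
      · have := (hf.1 i).1; positivity
      · have hτle : τ i ≤ ∑ j, τ j :=
          Finset.single_le_sum (fun j _ => (hf.1 j).1) (Finset.mem_univ i)
        have := hf.2
        linarith
  have hFF' : m < FF hK γ t τ' := by
    rw [FF, Finset.lt_inf'_iff]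
    intro i _
    by_cases h : i = i₀
    · subst h
      show m < τ' i * Real.logb 2 (1 + γ i * t / τ' i)
      rw [hτ'i₀]
      apply hball
      rw [Metric.mem_ball, Real.dist_eq]
      rw [abs_of_nonpos (by linarith)]
      linarith
    · show m < τ' i * Real.logb 2 (1 + γ i * t / τ' i)
      rw [hτ'ne i h]
      calc m ≤ τ i * Real.logb 2 (1 + γ i * t / τ i) := Finset.inf'_le _ (Finset.mem_univ _)
        _ < (τ i + δ / K) * Real.logb 2 (1 + γ i * t / (τ i + δ / K)) :=
            aux_strict_mono (mul_pos (hγ i) ht0) (hf.1 i).1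
              (lt_add_of_pos_right _ (div_pos hδ (by exact_mod_cast hK)))
  exact lt_of_lt_of_le hFF' (FF_le_sSup hK γ hγ ht0.le hfeas')


lemma comb_le (hγ : ∀ i, 0 < γ i) {t₁ t₂ a b : ℝ} (ht₁ : 0 ≤ t₁) (ht₂ : 0 ≤ t₂)
    (ha : 0 ≤ a) (hb : 0 ≤ b) (hab : a + b = 1) {τ₁ τ₂ : Fin K → ℝ}
    (h₁ : feas K t₁ τ₁) (h₂ : feas K t₂ τ₂) :
    feas K (a * t₁ + b * t₂) (fun i => a * τ₁ i + b * τ₂ i) ∧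
    a * FF hK γ t₁ τ₁ + b * FF hK γ t₂ τ₂ ≤
      FF hK γ (a * t₁ + b * t₂) (fun i => a * τ₁ i + b * τ₂ i) := by
  constructor
  · constructor
    · intro i
      obtain ⟨h1a, h1b⟩ := h₁.1 i
      obtain ⟨h2a, h2b⟩ := h₂.1 i
      show a * τ₁ i + b * τ₂ i ∈ Set.Icc (0:ℝ) 1
      exact ⟨by positivity, by nlinarith⟩
    · have hs : ∑ i, (a * τ₁ i + b * τ₂ i) = a * ∑ i, τ₁ i + b * ∑ i, τ₂ i := by
        rw [Finset.sum_add_distrib, ← Finset.mul_sum, ← Finset.mul_sum]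
      rw [hs]
      nlinarith [h₁.2, h₂.2]
  · apply Finset.le_inf'
    intro i _
    show a * FF hK γ t₁ τ₁ + b * FF hK γ t₂ τ₂ ≤
      (a * τ₁ i + b * τ₂ i) * Real.logb 2 (1 + γ i * (a * t₁ + b * t₂) / (a * τ₁ i + b * τ₂ i))
    have key := aux_concave (mul_nonneg (hγ i).le ht₁) (mul_nonneg (hγ i).le ht₂)
      (h₁.1 i).1 (h₂.1 i).1 ha hb hab
    rw [show γ i * (a * t₁ + b * t₂) = a * (γ i * t₁) + b * (γ i * t₂) by ring]
    calc a * FF hK γ t₁ τ₁ + b * FF hK γ t₂ τ₂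
        ≤ a * (τ₁ i * Real.logb 2 (1 + γ i * t₁ / τ₁ i)) +
          b * (τ₂ i * Real.logb 2 (1 + γ i * t₂ / τ₂ i)) := by
          have u₁ : FF hK γ t₁ τ₁ ≤ τ₁ i * Real.logb 2 (1 + γ i * t₁ / τ₁ i) :=
            Finset.inf'_le _ (Finset.mem_univ _)
          have u₂ : FF hK γ t₂ τ₂ ≤ τ₂ i * Real.logb 2 (1 + γ i * t₂ / τ₂ i) :=
            Finset.inf'_le _ (Finset.mem_univ _)
          nlinarith
      _ ≤ (a * τ₁ i + b * τ₂ i) *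
            Real.logb 2 (1 + (a * (γ i * t₁) + b * (γ i * t₂)) / (a * τ₁ i + b * τ₂ i)) := key


theorem stmt_10 (K : ℕ) (hK : 0 < K) (γ : Fin K → ℝ) (hγ : ∀ i, 0 < γ i)
    (g : ℝ → ℝ)
    (hg : ∀ t : ℝ, g t = sSup {v : ℝ | ∃ τ : Fin K → ℝ,
      (∀ i, τ i ∈ Set.Icc (0 : ℝ) 1) ∧ (∑ i, τ i ≤ 1 - t) ∧
      v = Finset.univ.inf'
        (Finset.univ_nonempty_iff.mpr (Fin.pos_iff_nonempty.mp hK))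
        (fun i => τ i * Real.logb 2 (1 + γ i * t / τ i))}) :
    ConcaveOn ℝ (Set.Icc (0 : ℝ) 1) g ∧
    (∀ t₁ ∈ Set.Ioo (0 : ℝ) 1, ∀ t₂ ∈ Set.Ioo (0 : ℝ) 1, t₁ ≠ t₂ →
      ∀ θ ∈ Set.Ioo (0 : ℝ) 1,
        θ * g t₁ + (1 - θ) * g t₂ < g (θ * t₁ + (1 - θ) * t₂)) := by
  have hgS : ∀ t, g t = sSup (SS hK γ t) := fun t => hg t
  constructor
  · refine ⟨convex_Icc 0 1, ?_⟩
    intro x hx y hy a b ha hb hab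
    simp only [smul_eq_mul]
    obtain ⟨hx0, hx1⟩ := hx
    obtain ⟨hy0, hy1⟩ := hy
    have hT0 : 0 ≤ a * x + b * y := by positivity
    have hT1 : a * x + b * y ≤ 1 := by nlinarith
    rw [hgS x, hgS y, hgS (a * x + b * y)]
    have key : ∀ v₁ ∈ SS hK γ x, ∀ v₂ ∈ SS hK γ y,
        a * v₁ + b * v₂ ≤ sSup (SS hK γ (a * x + b * y)) := by
      rintro v₁ ⟨τ₁, p1, p2, rfl⟩ v₂ ⟨τ₂, q1, q2, rfl⟩
      obtain ⟨hfc, hvc⟩ := comb_le hK γ hγ hx0 hy0 ha hb hab ⟨p1, p2⟩ ⟨q1, q2⟩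
      exact le_trans hvc (FF_le_sSup hK γ hγ hT0 hfc)
    obtain ⟨w₁, hw₁⟩ := SS_ne hK γ (t := x) hx1
    obtain ⟨w₂, hw₂⟩ := SS_ne hK γ (t := y) hy1
    rcases eq_or_lt_of_le ha with rfl|ha'
    · have hb1 : b = 1 := by linarith
      have h2 : sSup (SS hK γ y) ≤ sSup (SS hK γ (0 * x + b * y)) :=
        csSup_le ⟨w₂, hw₂⟩ fun v₂ hv₂ => by
          have := key w₁ hw₁ v₂ hv₂; rw [hb1] at this ⊢; linarith
      rw [hb1] at h2 ⊢; linarith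
    rcases eq_or_lt_of_le hb with rfl|hb'
    · have ha1 : a = 1 := by linarith
      have h2 : sSup (SS hK γ x) ≤ sSup (SS hK γ (a * x + 0 * y)) :=
        csSup_le ⟨w₁, hw₁⟩ fun v₁ hv₁ => by
          have := key v₁ hv₁ w₂ hw₂; rw [ha1] at this ⊢; linarith
      rw [ha1] at h2 ⊢; linarith
    · set C := sSup (SS hK γ (a * x + b * y)) with hC
      have hS2 : ∀ v₁ ∈ SS hK γ x, b * sSup (SS hK γ y) ≤ C - a * v₁ := by
        intro v₁ hv₁
        have h : sSup (SS hK γ y) ≤ (C - a * v₁) / b :=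
          csSup_le ⟨w₂, hw₂⟩ fun v₂ hv₂ =>
            (le_div_iff₀ hb').mpr (by linarith [key v₁ hv₁ v₂ hv₂])
        calc b * sSup (SS hK γ y) ≤ b * ((C - a * v₁) / b) :=
              mul_le_mul_of_nonneg_left h hb'.le
          _ = C - a * v₁ := by field_simp
      have hS1 : sSup (SS hK γ x) ≤ (C - b * sSup (SS hK γ y)) / a :=
        csSup_le ⟨w₁, hw₁⟩ fun v₁ hv₁ =>
          (le_div_iff₀ ha').mpr (by linarith [hS2 v₁ hv₁])
      have := (le_div_iff₀ ha').mp hS1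
      linarith
  · intro t₁ ht₁ t₂ ht₂ htne θ hθ
    obtain ⟨hθ0, hθ1⟩ := hθ
    obtain ⟨h10, h11⟩ := ht₁
    obtain ⟨h20, h21⟩ := ht₂
    have hT : θ * t₁ + (1 - θ) * t₂ ∈ Set.Ioo (0:ℝ) 1 := by
      constructor
      · nlinarith
      · nlinarith
    obtain ⟨σ₁, hf₁, hp₁, hs₁, hv₁⟩ := attain hK γ hγ ⟨h10, h11⟩
    obtain ⟨σ₂, hf₂, hp₂, hs₂, hv₂⟩ := attain hK γ hγ ⟨h20, h21⟩
    rw [hgS t₁, hgS t₂, hgS (θ * t₁ + (1 - θ) * t₂), ← hv₁, ← hv₂]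
    have hi₀ : ∃ i, γ i * t₁ * σ₂ i ≠ γ i * t₂ * σ₁ i := by
      by_contra hcon
      push_neg at hcon
      have hall : ∀ i, t₁ * σ₂ i = t₂ * σ₁ i := by
        intro i
        have h := hcon i
        have := (hγ i).ne'
        apply mul_left_cancel₀ this
        ring_nf
        ring_nf at h
        linarith
      have hsum : ∑ i, t₁ * σ₂ i = ∑ i, t₂ * σ₁ i :=
        Finset.sum_congr rfl fun i _ => hall i
      rw [← Finset.mul_sum, ← Finset.mul_sum, hs₁, hs₂] at hsum
      apply htne
      nlinarith [hsum]
    obtain ⟨i₀, hi₀⟩ := hi₀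
    obtain ⟨hfc, hvc⟩ := comb_le hK γ hγ (a := θ) (b := 1 - θ) h10.le h20.le hθ0.le (by linarith) (by ring) hf₁ hf₂
    have hstrict : θ * FF hK γ t₁ σ₁ + (1 - θ) * FF hK γ t₂ σ₂ <
        (θ * σ₁ i₀ + (1 - θ) * σ₂ i₀) * Real.logb 2
          (1 + γ i₀ * (θ * t₁ + (1 - θ) * t₂) / (θ * σ₁ i₀ + (1 - θ) * σ₂ i₀)) := by
      have key := aux_strict (c₁ := γ i₀ * t₁) (c₂ := γ i₀ * t₂) (a := θ) (b := 1 - θ)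
        (mul_nonneg (hγ i₀).le h10.le) (mul_nonneg (hγ i₀).le h20.le)
        (hp₁ i₀) (hp₂ i₀) hθ0 (by linarith) (by ring) hi₀
      rw [show γ i₀ * (θ * t₁ + (1 - θ) * t₂) = θ * (γ i₀ * t₁) + (1 - θ) * (γ i₀ * t₂) by ring]
      calc θ * FF hK γ t₁ σ₁ + (1 - θ) * FF hK γ t₂ σ₂
          ≤ θ * (σ₁ i₀ * Real.logb 2 (1 + γ i₀ * t₁ / σ₁ i₀)) +
            (1 - θ) * (σ₂ i₀ * Real.logb 2 (1 + γ i₀ * t₂ / σ₂ i₀)) :=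
            add_le_add
              (mul_le_mul_of_nonneg_left (Finset.inf'_le _ (Finset.mem_univ _)) hθ0.le)
              (mul_le_mul_of_nonneg_left (Finset.inf'_le _ (Finset.mem_univ _)) (by linarith))
        _ < _ := key
    rcases eq_or_lt_of_le hvc with heq|hlt2
    · have himp := improve hK γ hγ hT hfc i₀ (by rw [← heq]; exact hstrict)
      rw [← heq] at himp
      exact himp
    · exact lt_of_lt_of_le hlt2 (FF_le_sSup hK γ hγ hT.1.le hfc)
end main
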